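/- Assume in addition that g is locally Hölder continuous of some order β ∈ (0, H). Define L_t := X_t − X₀ − a∫₀^t s^{2H−1}/X_s ds + b∫₀^t X_s ds − σ g(t) for t ≥ 0 (all integrals Lebesgue integrals). Then L_t ≥ 0 for every t ≥ 0; equivalently, there is a nonnegative function L with X_t = X₀ + a∫₀^t s^{2H−1}/X_s ds − b∫₀^t X_s ds + σ g(t) + L_t for all t ≥ 0. -/

import Mathlib

open MeasureTheory Filter Set

/-- `X` is a continuous solution on `[0,T]` of the ε-approximating equation
`X_t = X₀ + a ∫₀ᵗ (s+ε)^{2H-1} / (X_s 1_{X_s>0} + ε) ds − b ∫₀ᵗ X_s ds + σ g(t)`. -/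
def approxSol (X₀ a b σ H : ℝ) (g : ℝ → ℝ) (T ε : ℝ) (X : ℝ → ℝ) : Prop :=
  ContinuousOn X (Set.Icc 0 T) ∧
    ∀ t ∈ Set.Icc (0:ℝ) T,
      X t = X₀ + a * (∫ s in (0:ℝ)..t,
            (s + ε) ^ (2 * H - 1) / ((if 0 < X s then X s else 0) + ε))
          - b * (∫ s in (0:ℝ)..t, X s) + σ * g t

namespace Cor34

lemma if_eq_max (x : ℝ) : (if 0 < x then x else 0) = max x 0 := by
  rcases lt_or_ge 0 x with h | h
  · rw [if_pos h, max_eq_left h.le]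
  · rw [if_neg (not_lt.2 h), max_eq_right h]

/-- The drift integrand, written with `max`. -/
noncomputable def drift (H ε : ℝ) (Y : ℝ → ℝ) (s : ℝ) : ℝ :=
  (s + ε) ^ (2 * H - 1) / (max (Y s) 0 + ε)

lemma drift_nonneg {H ε : ℝ} {Y : ℝ → ℝ} {s : ℝ} (hs : 0 ≤ s) (hε : 0 < ε) :
    0 ≤ drift H ε Y s := by
  have h1 : (0:ℝ) ≤ max (Y s) 0 := le_max_right _ _
  exact div_nonneg (Real.rpow_nonneg (by linarith) _) (by linarith)

lemma drift_den_pos {ε : ℝ} (hε : 0 < ε) (y : ℝ) : 0 < max y 0 + ε := by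
  have h1 : (0:ℝ) ≤ max y 0 := le_max_right _ _
  linarith

lemma approxSol_eq {X₀ a b σ H : ℝ} {g : ℝ → ℝ} {T ε : ℝ} {Y : ℝ → ℝ}
    (h : approxSol X₀ a b σ H g T ε Y) {t : ℝ} (ht : t ∈ Icc (0:ℝ) T) :
    Y t = X₀ + a * (∫ s in (0:ℝ)..t, drift H ε Y s)
      - b * (∫ s in (0:ℝ)..t, Y s) + σ * g t := by
  have := h.2 t ht
  simpa only [drift, if_eq_max] using this

lemma approxSol_zero {X₀ a b σ H : ℝ} {g : ℝ → ℝ} {T ε : ℝ} {Y : ℝ → ℝ}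
    (h : approxSol X₀ a b σ H g T ε Y) (hg0 : g 0 = 0) (hT : 0 ≤ T) :
    Y 0 = X₀ := by
  have := approxSol_eq h (left_mem_Icc.2 hT)
  simpa [hg0] using this

lemma drift_continuousOn {H ε T : ℝ} {Y : ℝ → ℝ} (hε : 0 < ε)
    (hY : ContinuousOn Y (Icc 0 T)) : ContinuousOn (drift H ε Y) (Icc 0 T) := by
  apply ContinuousOn.div
  · apply ContinuousOn.rpow_const (continuous_id.add continuous_const).continuousOn
    intro x hx
    left
    have := hx.1
    show x + ε ≠ 0
    positivity
  · exact ((continuous_id.max continuous_const).comp_continuousOn hY).add continuousOn_const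
  · exact fun x _ => (drift_den_pos hε (Y x)).ne'

/-- Comparison: a solution with larger `ε` is pointwise smaller. -/
lemma comparison {X₀ a b σ H : ℝ} {g : ℝ → ℝ} (ha : 0 < a) (hb : 0 ≤ b)
    (hH : H < 1/2) (hg0 : g 0 = 0) {T ε1 ε2 : ℝ} (hT : 0 < T)
    (hε1 : 0 < ε1) (hε12 : ε1 ≤ ε2)
    {X1 X2 : ℝ → ℝ} (h1 : approxSol X₀ a b σ H g T ε1 X1)
    (h2 : approxSol X₀ a b σ H g T ε2 X2) :
    ∀ r ∈ Icc (0:ℝ) T, X2 r ≤ X1 r := by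
  by_contra hcon
  push_neg at hcon
  obtain ⟨r, hr, hlt⟩ := hcon
  have hε2 : 0 < ε2 := lt_of_lt_of_le hε1 hε12
  have h10 : X1 0 = X₀ := approxSol_zero h1 hg0 hT.le
  have h20 : X2 0 = X₀ := approxSol_zero h2 hg0 hT.le
  set S : Set ℝ := Icc 0 r ∩ (fun s => X1 s - X2 s) ⁻¹' Ici 0 with hSdef
  have hIccT : Icc (0:ℝ) r ⊆ Icc 0 T := Icc_subset_Icc le_rfl hr.2
  have hScl : IsClosed S :=
    ContinuousOn.preimage_isClosed_of_isClosed
      ((h1.1.mono hIccT).sub (h2.1.mono hIccT)) isClosed_Icc isClosed_Ici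
  have hS0 : (0:ℝ) ∈ S := by
    refine ⟨⟨le_refl 0, hr.1⟩, ?_⟩
    simp [h10, h20]
  have hSbdd : BddAbove S := ⟨r, fun x hx => hx.1.2⟩
  set τ := sSup S with hτdef
  have hτS : τ ∈ S := hScl.csSup_mem ⟨0, hS0⟩ hSbdd
  have hτ0 : 0 ≤ τ := hτS.1.1
  have hτr : τ ≤ r := hτS.1.2
  have huτ : X2 τ ≤ X1 τ := by have := hτS.2; simpa [sub_nonneg] using this
  have hτltr : τ < r := by
    rcases lt_or_eq_of_le hτr with h | h
    · exact h
    · exact absurd (h ▸ huτ) (not_le.2 hlt)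
  -- on (τ, r], X1 < X2
  have hkey : ∀ s ∈ Ioc τ r, X1 s < X2 s := by
    intro s hs
    by_contra hns
    push_neg at hns
    have hsS : s ∈ S := ⟨⟨hτ0.trans hs.1.le, hs.2⟩, by simpa [sub_nonneg] using hns⟩
    exact absurd (le_csSup hSbdd hsS) (not_le.2 hs.1)
  -- integrability
  have hsubT : Icc τ r ⊆ Icc 0 T := Icc_subset_Icc hτ0 hr.2
  have hI1a : IntervalIntegrable (drift H ε1 X1) volume 0 τ :=
    ContinuousOn.intervalIntegrable_of_Icc hτ0
      ((drift_continuousOn hε1 h1.1).mono (Icc_subset_Icc le_rfl (hτr.trans hr.2)))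
  have hI1b : IntervalIntegrable (drift H ε1 X1) volume τ r :=
    ContinuousOn.intervalIntegrable_of_Icc hτltr.le
      ((drift_continuousOn hε1 h1.1).mono hsubT)
  have hI2a : IntervalIntegrable (drift H ε2 X2) volume 0 τ :=
    ContinuousOn.intervalIntegrable_of_Icc hτ0
      ((drift_continuousOn hε2 h2.1).mono (Icc_subset_Icc le_rfl (hτr.trans hr.2)))
  have hI2b : IntervalIntegrable (drift H ε2 X2) volume τ r :=
    ContinuousOn.intervalIntegrable_of_Icc hτltr.le
      ((drift_continuousOn hε2 h2.1).mono hsubT)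
  have hX1a : IntervalIntegrable X1 volume 0 τ :=
    ContinuousOn.intervalIntegrable_of_Icc hτ0
      (h1.1.mono (Icc_subset_Icc le_rfl (hτr.trans hr.2)))
  have hX1b : IntervalIntegrable X1 volume τ r :=
    ContinuousOn.intervalIntegrable_of_Icc hτltr.le (h1.1.mono hsubT)
  have hX2a : IntervalIntegrable X2 volume 0 τ :=
    ContinuousOn.intervalIntegrable_of_Icc hτ0
      (h2.1.mono (Icc_subset_Icc le_rfl (hτr.trans hr.2)))
  have hX2b : IntervalIntegrable X2 volume τ r :=
    ContinuousOn.intervalIntegrable_of_Icc hτltr.le (h2.1.mono hsubT)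
  -- split the integrals
  have hsplit : ∀ (f : ℝ → ℝ), IntervalIntegrable f volume 0 τ →
      IntervalIntegrable f volume τ r →
      (∫ s in (0:ℝ)..r, f s) = (∫ s in (0:ℝ)..τ, f s) + ∫ s in Ioc τ r, f s := by
    intro f hfa hfb
    rw [← intervalIntegral.integral_of_le hτltr.le,
      intervalIntegral.integral_add_adjacent_intervals hfa hfb]
  have e1r := approxSol_eq h1 ⟨hτ0.trans hτr, hr.2⟩
  have e1τ := approxSol_eq h1 ⟨hτ0, hτr.trans hr.2⟩
  have e2r := approxSol_eq h2 ⟨hτ0.trans hτr, hr.2⟩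
  have e2τ := approxSol_eq h2 ⟨hτ0, hτr.trans hr.2⟩
  rw [hsplit _ hI1a hI1b, hsplit _ hX1a hX1b] at e1r
  rw [hsplit _ hI2a hI2b, hsplit _ hX2a hX2b] at e2r
  -- compare the integrals over Ioc τ r
  have hA : (∫ s in Ioc τ r, drift H ε2 X2 s) ≤ ∫ s in Ioc τ r, drift H ε1 X1 s := by
    apply setIntegral_mono_on
      ((intervalIntegrable_iff_integrableOn_Ioc_of_le hτltr.le).1 hI2b)
      ((intervalIntegrable_iff_integrableOn_Ioc_of_le hτltr.le).1 hI1b)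
      measurableSet_Ioc
    intro s hs
    have hs0 : 0 < s := lt_of_le_of_lt hτ0 hs.1
    have hx12 : X1 s < X2 s := hkey s hs
    unfold drift
    apply div_le_div₀ (Real.rpow_nonneg (by linarith) _)
      (Real.rpow_le_rpow_of_nonpos (by linarith) (by linarith) (by linarith))
      (drift_den_pos hε1 (X1 s))
    have : max (X1 s) 0 ≤ max (X2 s) 0 := max_le_max hx12.le le_rfl
    linarith
  have hB : (∫ s in Ioc τ r, X1 s) ≤ ∫ s in Ioc τ r, X2 s := by
    apply setIntegral_mono_on
      ((intervalIntegrable_iff_integrableOn_Ioc_of_le hτltr.le).1 hX1b)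
      ((intervalIntegrable_iff_integrableOn_Ioc_of_le hτltr.le).1 hX2b)
      measurableSet_Ioc
    exact fun s hs => (hkey s hs).le
  have hfin : 0 ≤ a * ((∫ s in Ioc τ r, drift H ε1 X1 s) - ∫ s in Ioc τ r, drift H ε2 X2 s) :=
    mul_nonneg ha.le (by linarith)
  have hfin2 : b * ((∫ s in Ioc τ r, X1 s) - ∫ s in Ioc τ r, X2 s) ≤ 0 :=
    mul_nonpos_of_nonneg_of_nonpos hb (by linarith)
  have : X1 r - X2 r = (X1 τ - X2 τ)
      + a * ((∫ s in Ioc τ r, drift H ε1 X1 s) - ∫ s in Ioc τ r, drift H ε2 X2 s)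
      - b * ((∫ s in Ioc τ r, X1 s) - ∫ s in Ioc τ r, X2 s) := by
    rw [e1r, e2r, e1τ, e2τ]; ring
  linarith

/-- Uniform (in `ε ≤ 1`) upper bound for solutions on `[0,t]`. -/
lemma unif_bound {X₀ a b σ H : ℝ} {g : ℝ → ℝ} (hX₀ : 0 < X₀) (ha : 0 < a) (hb : 0 ≤ b)
    (hσ : 0 < σ) (hH0 : 0 < H) (hH : H < 1/2) (hg0 : g 0 = 0)
    {t : ℝ} (ht : 0 < t) {Cg : ℝ} (hCg : ∀ s ∈ Icc (0:ℝ) t, |g s| ≤ Cg)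
    {ε : ℝ} (hε : 0 < ε) (hεle : ε ≤ 1) {Y : ℝ → ℝ}
    (hY : approxSol X₀ a b σ H g t ε Y) :
    ∀ s ∈ Icc (0:ℝ) t, Y s ≤ (X₀ + σ * Cg + 1)
      + (a * ((t + 1) ^ (2 * H) / (2 * H)) + 2 * σ * Cg) := by
  have hCg0 : 0 ≤ Cg := by
    have := hCg 0 ⟨le_refl 0, ht.le⟩
    rw [hg0] at this
    simpa using this
  set K : ℝ := X₀ + σ * Cg + 1 with hKdef
  set C2 : ℝ := a * ((t + 1) ^ (2 * H) / (2 * H)) + 2 * σ * Cg with hC2def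
  have hK1 : 1 ≤ K := by
    have : 0 ≤ σ * Cg := mul_nonneg hσ.le hCg0
    simp only [hKdef]; linarith
  have hrpow_nonneg : (0:ℝ) ≤ (t + 1) ^ (2 * H) := Real.rpow_nonneg (by linarith) _
  have hC2nonneg : 0 ≤ C2 := by
    have h1 : 0 ≤ a * ((t + 1) ^ (2 * H) / (2 * H)) :=
      mul_nonneg ha.le (div_nonneg hrpow_nonneg (by linarith))
    have h2 : 0 ≤ 2 * σ * Cg := by positivity
    simp only [hC2def]; linarith
  by_contra hcon
  push_neg at hcon
  obtain ⟨s2, hs2, hgt⟩ := hcon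
  have hY0 : Y 0 = X₀ := approxSol_zero hY hg0 ht.le
  have hKlt : K < Y s2 := by linarith
  set S : Set ℝ := Icc 0 s2 ∩ (fun s => K - Y s) ⁻¹' Ici 0 with hSdef
  have hIcct : Icc (0:ℝ) s2 ⊆ Icc 0 t := Icc_subset_Icc le_rfl hs2.2
  have hScl : IsClosed S :=
    ContinuousOn.preimage_isClosed_of_isClosed
      (continuousOn_const.sub (hY.1.mono hIcct)) isClosed_Icc isClosed_Ici
  have hS0 : (0:ℝ) ∈ S := by
    refine ⟨⟨le_refl 0, hs2.1⟩, ?_⟩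
    simp only [mem_preimage, mem_Ici, hY0, sub_nonneg, hKdef]
    linarith [mul_nonneg hσ.le hCg0]
  have hSbdd : BddAbove S := ⟨s2, fun x hx => hx.1.2⟩
  set s1 := sSup S with hs1def
  have hs1S : s1 ∈ S := hScl.csSup_mem ⟨0, hS0⟩ hSbdd
  have hs10 : 0 ≤ s1 := hs1S.1.1
  have hs1s2 : s1 ≤ s2 := hs1S.1.2
  have hYs1 : Y s1 ≤ K := by have := hs1S.2; simp only [mem_preimage, mem_Ici, sub_nonneg] at this; exact this
  have hs1lt : s1 < s2 := by
    rcases lt_or_eq_of_le hs1s2 with h | h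
    · exact h
    · rw [h] at hYs1; linarith
  have hkey : ∀ s ∈ Ioc s1 s2, K < Y s := by
    intro s hs
    by_contra hns
    push_neg at hns
    have hsS : s ∈ S := ⟨⟨hs10.trans hs.1.le, hs.2⟩, by
      simp only [mem_preimage, mem_Ici, sub_nonneg]; exact hns⟩
    exact absurd (le_csSup hSbdd hsS) (not_le.2 hs.1)
  -- integrability
  have hsubt : Icc s1 s2 ⊆ Icc 0 t := Icc_subset_Icc hs10 hs2.2
  have hIda : IntervalIntegrable (drift H ε Y) volume 0 s1 :=
    ContinuousOn.intervalIntegrable_of_Icc hs10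
      ((drift_continuousOn hε hY.1).mono (Icc_subset_Icc le_rfl (hs1s2.trans hs2.2)))
  have hIdb : IntervalIntegrable (drift H ε Y) volume s1 s2 :=
    ContinuousOn.intervalIntegrable_of_Icc hs1lt.le
      ((drift_continuousOn hε hY.1).mono hsubt)
  have hIYa : IntervalIntegrable Y volume 0 s1 :=
    ContinuousOn.intervalIntegrable_of_Icc hs10
      (hY.1.mono (Icc_subset_Icc le_rfl (hs1s2.trans hs2.2)))
  have hIYb : IntervalIntegrable Y volume s1 s2 :=
    ContinuousOn.intervalIntegrable_of_Icc hs1lt.le (hY.1.mono hsubt)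
  have hcontpow : ContinuousOn (fun s : ℝ => (s + ε) ^ (2 * H - 1)) (Icc 0 t) := by
    apply ContinuousOn.rpow_const (continuous_id.add continuous_const).continuousOn
    intro x hx
    left
    have := hx.1
    show x + ε ≠ 0
    positivity
  have hIpow : IntegrableOn (fun s : ℝ => (s + ε) ^ (2 * H - 1)) (Ioc 0 t) :=
    (intervalIntegrable_iff_integrableOn_Ioc_of_le ht.le).1
      (ContinuousOn.intervalIntegrable_of_Icc ht.le hcontpow)
  have hsplit : ∀ (f : ℝ → ℝ), IntervalIntegrable f volume 0 s1 →
      IntervalIntegrable f volume s1 s2 →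
      (∫ s in (0:ℝ)..s2, f s) = (∫ s in (0:ℝ)..s1, f s) + ∫ s in Ioc s1 s2, f s := by
    intro f hfa hfb
    rw [← intervalIntegral.integral_of_le hs1lt.le,
      intervalIntegral.integral_add_adjacent_intervals hfa hfb]
  have e2 := approxSol_eq hY hs2
  have e1 := approxSol_eq hY (hsubt ⟨le_rfl, hs1lt.le⟩)
  rw [hsplit _ hIda hIdb, hsplit _ hIYa hIYb] at e2
  -- bound the drift integral
  have hdb : (∫ s in Ioc s1 s2, drift H ε Y s) ≤ (t + 1) ^ (2 * H) / (2 * H) := by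
    have step1 : (∫ s in Ioc s1 s2, drift H ε Y s)
        ≤ ∫ s in Ioc s1 s2, (s + ε) ^ (2 * H - 1) := by
      apply setIntegral_mono_on
        ((intervalIntegrable_iff_integrableOn_Ioc_of_le hs1lt.le).1 hIdb)
        (hIpow.mono_set (Ioc_subset_Ioc hs10 hs2.2))
        measurableSet_Ioc
      intro s hs
      have hs0 : 0 ≤ s := hs10.trans hs.1.le
      have hKs := hkey s hs
      have hden : 1 ≤ max (Y s) 0 + ε := by
        have : Y s ≤ max (Y s) 0 := le_max_left _ _
        linarith
      exact div_le_self (Real.rpow_nonneg (by linarith) _) hden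
    have step2 : (∫ s in Ioc s1 s2, (s + ε) ^ (2 * H - 1))
        ≤ ∫ s in Ioc 0 t, (s + ε) ^ (2 * H - 1) := by
      apply setIntegral_mono_set hIpow
      · filter_upwards [ae_restrict_mem measurableSet_Ioc] with s hs
        exact Real.rpow_nonneg (by linarith [hs.1]) _
      · exact HasSubset.Subset.eventuallyLE (Ioc_subset_Ioc hs10 hs2.2)
    have step3 : (∫ s in Ioc 0 t, (s + ε) ^ (2 * H - 1))
        = ((t + ε) ^ (2 * H) - ε ^ (2 * H)) / (2 * H) := by
      rw [← intervalIntegral.integral_of_le ht.le]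
      rw [intervalIntegral.integral_comp_add_right (fun y => y ^ (2 * H - 1)) ε]
      rw [integral_rpow (Or.inl (by linarith))]
      norm_num
    have step4 : ((t + ε) ^ (2 * H) - ε ^ (2 * H)) / (2 * H) ≤ (t + 1) ^ (2 * H) / (2 * H) := by
      apply div_le_div_of_nonneg_right ?_ (by linarith)
      have h5 : (t + ε) ^ (2 * H) ≤ (t + 1) ^ (2 * H) :=
        Real.rpow_le_rpow (by linarith) (by linarith) (by linarith)
      have h6 : 0 ≤ ε ^ (2 * H) := Real.rpow_nonneg hε.le _
      linarith
    calc (∫ s in Ioc s1 s2, drift H ε Y s) ≤ _ := step1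
      _ ≤ _ := step2
      _ = _ := step3
      _ ≤ _ := step4
  have hYint_nonneg : 0 ≤ ∫ s in Ioc s1 s2, Y s := by
    apply setIntegral_nonneg measurableSet_Ioc
    intro s hs
    have := hkey s hs
    linarith
  have hgbd : σ * g s2 - σ * g s1 ≤ 2 * σ * Cg := by
    have h1 : |g s2| ≤ Cg := hCg s2 hs2
    have h2 : |g s1| ≤ Cg := hCg s1 (hsubt ⟨le_rfl, hs1lt.le⟩)
    have h3 := abs_le.1 h1
    have h4 := abs_le.1 h2
    nlinarith
  have hfinal : Y s2 ≤ Y s1 + a * ((t + 1) ^ (2 * H) / (2 * H)) + 2 * σ * Cg := by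
    have h7 : a * (∫ s in Ioc s1 s2, drift H ε Y s) ≤ a * ((t + 1) ^ (2 * H) / (2 * H)) :=
      mul_le_mul_of_nonneg_left hdb ha.le
    have h8 : 0 ≤ b * ∫ s in Ioc s1 s2, Y s := mul_nonneg hb hYint_nonneg
    calc Y s2 = Y s1 + a * (∫ s in Ioc s1 s2, drift H ε Y s)
        - b * (∫ s in Ioc s1 s2, Y s) + (σ * g s2 - σ * g s1) := by
          rw [e2, e1]; ring
      _ ≤ _ := by linarith
  simp only [hKdef, hC2def] at hgt hYs1
  linarith

end Cor34

/-- **Corollary 3.4.** Defining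
`L_t = X_t − X₀ − a∫₀ᵗ s^{2H-1}/X_s ds + b∫₀ᵗ X_s ds − σ g(t)`, one has `L_t ≥ 0`
for all `t ≥ 0`; equivalently `X_t = X₀ + a∫₀ᵗ s^{2H-1}/X_s ds − b∫₀ᵗ X_s ds
+ σ g(t) + L_t` with `L` nonnegative. -/
theorem limit_process_equation_with_L
    (X₀ a b σ H : ℝ) (hX₀ : 0 < X₀) (ha : 0 < a) (hb : 0 ≤ b) (hσ : 0 < σ)
    (hH0 : 0 < H) (hH : H < 1/2)
    (g : ℝ → ℝ) (hgc : ContinuousOn g (Set.Ici 0)) (hg0 : g 0 = 0)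
    (Xe : ℝ → ℝ → ℝ)
    (hXe : ∀ ε > (0:ℝ), ∀ T > (0:ℝ), approxSol X₀ a b σ H g T ε (Xe ε))
    (X : ℝ → ℝ)
    (hX : ∀ t ≥ (0:ℝ),
      Tendsto (fun ε => Xe ε t) (nhdsWithin 0 (Set.Ioi 0)) (nhds (X t)))
    (β : ℝ) (hβ0 : 0 < β) (hβH : β < H)
    (hgH : ∀ T > (0:ℝ), ∃ C > (0:ℝ), ∀ s ∈ Set.Icc (0:ℝ) T, ∀ t ∈ Set.Icc (0:ℝ) T,
      |g t - g s| ≤ C * |t - s| ^ β)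
    :
    ∀ t ≥ (0:ℝ),
      0 ≤ X t - X₀ - a * (∫ s in (0:ℝ)..t, s ^ (2 * H - 1) / X s)
        + b * (∫ s in (0:ℝ)..t, X s) - σ * g t := by
  intro t ht
  rcases eq_or_lt_of_le ht with hteq | htpos
  · -- t = 0
    subst hteq
    have hX0 : X 0 = X₀ := by
      have hconst : ∀ᶠ ε in nhdsWithin (0:ℝ) (Ioi 0), Xe ε 0 = X₀ := by
        filter_upwards [eventually_mem_nhdsWithin] with ε hε
        exact Cor34.approxSol_zero (hXe ε hε 1 one_pos) hg0 zero_le_one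
      have h1 : Tendsto (fun ε => Xe ε 0) (nhdsWithin (0:ℝ) (Ioi 0)) (nhds X₀) :=
        tendsto_const_nhds.congr' (hconst.mono fun ε h => h.symm)
      exact tendsto_nhds_unique (hX 0 le_rfl) h1
    simp [hX0, hg0]
  · haveI hfin : IsFiniteMeasure (volume.restrict (Ioc (0:ℝ) t)) :=
      ⟨by rw [Measure.restrict_apply_univ]; exact measure_Ioc_lt_top⟩
    set εs : ℕ → ℝ := fun n => 1 / ((n : ℝ) + 1) with hεsdef
    have hεpos : ∀ n, 0 < εs n := fun n => by positivity
    have hεle1 : ∀ n, εs n ≤ 1 := by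
      intro n
      rw [hεsdef]
      simp only
      rw [div_le_one (by positivity)]
      linarith [Nat.cast_nonneg (α := ℝ) n]
    have hεs0 : Tendsto εs atTop (nhds 0) := tendsto_one_div_add_atTop_nhds_zero_nat
    have hεsW : Tendsto εs atTop (nhdsWithin 0 (Ioi 0)) :=
      tendsto_nhdsWithin_of_tendsto_nhds_of_eventually_within _ hεs0
        (Eventually.of_forall hεpos)
    have hXlim : ∀ s, 0 ≤ s → Tendsto (fun n => Xe (εs n) s) atTop (nhds (X s)) :=
      fun s hs => (hX s hs).comp hεsW
    have hsol : ∀ ε, 0 < ε → approxSol X₀ a b σ H g t ε (Xe ε) := fun ε hε => hXe ε hε t htpos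
    have hcont : ∀ ε, 0 < ε → ContinuousOn (Xe ε) (Icc 0 t) := fun ε hε => (hsol ε hε).1
    have hmono : ∀ ε1 ε2 : ℝ, 0 < ε1 → ε1 ≤ ε2 → ∀ s ∈ Icc (0:ℝ) t, Xe ε2 s ≤ Xe ε1 s :=
      fun ε1 ε2 h1 h12 => Cor34.comparison ha hb hH hg0 htpos h1 h12
        (hsol ε1 h1) (hsol ε2 (lt_of_lt_of_le h1 h12))
    have hle : ∀ ε, 0 < ε → ∀ s ∈ Icc (0:ℝ) t, Xe ε s ≤ X s := by
      intro ε hε s hs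
      apply ge_of_tendsto (hX s hs.1)
      filter_upwards [eventually_mem_nhdsWithin,
        mem_nhdsWithin_of_mem_nhds (Iio_mem_nhds hε)] with ε' h1 h2
      exact hmono ε' ε h1 h2.le s hs
    obtain ⟨Cg, hCg⟩ := (isCompact_Icc (a := (0:ℝ)) (b := t)).exists_bound_of_continuousOn
      (hgc.mono Icc_subset_Ici_self)
    have hCg' : ∀ s ∈ Icc (0:ℝ) t, |g s| ≤ Cg := by
      intro s hs
      have := hCg s hs
      rwa [Real.norm_eq_abs] at this
    set U : ℝ := (X₀ + σ * Cg + 1) + (a * ((t + 1) ^ (2 * H) / (2 * H)) + 2 * σ * Cg)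
      with hUdef
    have hXeU : ∀ ε, 0 < ε → ε ≤ 1 → ∀ s ∈ Icc (0:ℝ) t, Xe ε s ≤ U :=
      fun ε hε hε1 => Cor34.unif_bound hX₀ ha hb hσ hH0 hH hg0 htpos hCg' hε hε1 (hsol ε hε)
    have hXU : ∀ s ∈ Icc (0:ℝ) t, X s ≤ U := by
      intro s hs
      apply le_of_tendsto (hX s hs.1)
      filter_upwards [eventually_mem_nhdsWithin,
        mem_nhdsWithin_of_mem_nhds (Iio_mem_nhds one_pos)] with ε' h1 h2
      exact hXeU ε' h1 h2.le s hs
    obtain ⟨Cm, hCm⟩ := (isCompact_Icc (a := (0:ℝ)) (b := t)).exists_bound_of_continuousOn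
      (hcont 1 one_pos)
    set R : ℝ := max U Cm with hRdef
    have hXeR : ∀ ε, 0 < ε → ε ≤ 1 → ∀ s ∈ Icc (0:ℝ) t, |Xe ε s| ≤ R := by
      intro ε hε hε1 s hs
      rw [abs_le]
      constructor
      · have h1 : -Cm ≤ Xe 1 s := by
          have := hCm s hs
          rw [Real.norm_eq_abs, abs_le] at this
          exact this.1
        have h2 : Xe 1 s ≤ Xe ε s := hmono ε 1 hε hε1 s hs
        have h3 : Cm ≤ R := le_max_right _ _
        linarith
      · exact le_trans (hXeU ε hε hε1 s hs) (le_max_left _ _)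
    have hXR : ∀ s ∈ Icc (0:ℝ) t, |X s| ≤ R := by
      intro s hs
      rw [abs_le]
      constructor
      · have h1 : -Cm ≤ Xe 1 s := by
          have := hCm s hs
          rw [Real.norm_eq_abs, abs_le] at this
          exact this.1
        have h2 : Xe 1 s ≤ X s := hle 1 one_pos s hs
        have h3 : Cm ≤ R := le_max_right _ _
        linarith
      · exact le_trans (hXU s hs) (le_max_left _ _)
    have hXems : ∀ n, AEStronglyMeasurable (Xe (εs n)) (volume.restrict (Ioc (0:ℝ) t)) :=
      fun n =>
        ((hcont _ (hεpos n)).mono Ioc_subset_Icc_self).aestronglyMeasurable measurableSet_Ioc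
    have haemem : ∀ᵐ s ∂(volume.restrict (Ioc (0:ℝ) t)), s ∈ Ioc (0:ℝ) t :=
      ae_restrict_mem measurableSet_Ioc
    have hXms : AEStronglyMeasurable X (volume.restrict (Ioc (0:ℝ) t)) :=
      aestronglyMeasurable_of_tendsto_ae atTop hXems
        (haemem.mono fun s hs => hXlim s hs.1.le)
    have hBtend : Tendsto (fun n => ∫ s in Ioc (0:ℝ) t, Xe (εs n) s) atTop
        (nhds (∫ s in Ioc (0:ℝ) t, X s)) := by
      apply tendsto_integral_of_dominated_convergence (fun _ => R) hXems
        (integrable_const R)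
      · intro n
        filter_upwards [haemem] with s hs
        rw [Real.norm_eq_abs]
        exact hXeR _ (hεpos n) (hεle1 n) s (Ioc_subset_Icc_self hs)
      · filter_upwards [haemem] with s hs
        exact hXlim s hs.1.le
    set I : ℕ → ℝ := fun n => ∫ s in (0:ℝ)..t, Cor34.drift H (εs n) (Xe (εs n)) s with hIdef
    have heqn : ∀ n, a * I n = Xe (εs n) t - X₀
        + b * (∫ s in (0:ℝ)..t, Xe (εs n) s) - σ * g t := by
      intro n
      have h1 := Cor34.approxSol_eq (hsol _ (hεpos n)) (right_mem_Icc.2 htpos.le)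
      simp only [hIdef]
      linarith [h1]
    set c : ℝ := X t - X₀ + b * (∫ s in (0:ℝ)..t, X s) - σ * g t with hcdef
    have hBtend' : Tendsto (fun n => ∫ s in (0:ℝ)..t, Xe (εs n) s) atTop
        (nhds (∫ s in (0:ℝ)..t, X s)) := by
      simp only [intervalIntegral.integral_of_le htpos.le]
      exact hBtend
    have hctend : Tendsto (fun n => a * I n) atTop (nhds c) := by
      have h1 : Tendsto (fun n => Xe (εs n) t - X₀
          + b * (∫ s in (0:ℝ)..t, Xe (εs n) s) - σ * g t) atTop (nhds c) := by
        rw [hcdef]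
        exact (((hXlim t htpos.le).sub_const X₀).add
          (hBtend'.const_mul b)).sub_const (σ * g t)
      exact h1.congr fun n => (heqn n).symm
    have hI0 : ∀ n, 0 ≤ I n := fun n =>
      intervalIntegral.integral_nonneg htpos.le
        (fun s hs => Cor34.drift_nonneg hs.1 (hεpos n))
    have hc0 : 0 ≤ c := ge_of_tendsto' hctend fun n => mul_nonneg ha.le (hI0 n)
    have hgoal : a * (∫ s in (0:ℝ)..t, s ^ (2 * H - 1) / X s) ≤ c := by
      by_cases hJ : IntervalIntegrable (fun s => s ^ (2 * H - 1) / X s) volume 0 t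
      · -- Fatou argument
        have hJint : IntegrableOn (fun s => s ^ (2 * H - 1) / X s) (Ioc 0 t) :=
          (intervalIntegrable_iff_integrableOn_Ioc_of_le htpos.le).1 hJ
        have hdriftcont : ∀ n, ContinuousOn (Cor34.drift H (εs n) (Xe (εs n))) (Icc 0 t) :=
          fun n => Cor34.drift_continuousOn (hεpos n) (hcont _ (hεpos n))
        have hdriftint : ∀ n, IntegrableOn (Cor34.drift H (εs n) (Xe (εs n))) (Ioc 0 t) :=
          fun n => (intervalIntegrable_iff_integrableOn_Ioc_of_le htpos.le).1
            (ContinuousOn.intervalIntegrable_of_Icc htpos.le (hdriftcont n))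
        have hFmeas : ∀ n, AEMeasurable
            (fun s => ENNReal.ofReal (Cor34.drift H (εs n) (Xe (εs n)) s))
            (volume.restrict (Ioc (0:ℝ) t)) := fun n =>
          ENNReal.measurable_ofReal.comp_aemeasurable
            (((hdriftcont n).mono Ioc_subset_Icc_self).aestronglyMeasurable
              measurableSet_Ioc).aemeasurable
        have hpt : ∀ s ∈ Ioc (0:ℝ) t,
            ENNReal.ofReal (s ^ (2 * H - 1) / X s)
              ≤ liminf (fun n =>
                  ENNReal.ofReal (Cor34.drift H (εs n) (Xe (εs n)) s)) atTop := by
          intro s hs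
          rcases le_or_gt (X s) 0 with hXs | hXs
          · have hnp : s ^ (2 * H - 1) / X s ≤ 0 :=
              div_nonpos_iff.2 (Or.inl ⟨Real.rpow_nonneg hs.1.le _, hXs⟩)
            simp [ENNReal.ofReal_eq_zero.2 hnp]
          · have hmax : max (X s) 0 = X s := max_eq_left hXs.le
            have hlow : Tendsto (fun n => (s + εs n) ^ (2 * H - 1) / (max (X s) 0 + εs n))
                atTop (nhds (s ^ (2 * H - 1) / X s)) := by
              rw [hmax]
              have h1 : Tendsto (fun n => s + εs n) atTop (nhds s) := by
                simpa using (tendsto_const_nhds (x := s)).add hεs0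
              have hnum : Tendsto (fun n => (s + εs n) ^ (2 * H - 1)) atTop
                  (nhds (s ^ (2 * H - 1))) :=
                ((Real.continuousAt_rpow_const s _ (Or.inl hs.1.ne')).tendsto).comp h1
              have hden : Tendsto (fun n => X s + εs n) atTop (nhds (X s)) := by
                simpa using (tendsto_const_nhds (x := X s)).add hεs0
              exact hnum.div hden hXs.ne'
            have hbd : ∀ n, ENNReal.ofReal ((s + εs n) ^ (2 * H - 1) / (max (X s) 0 + εs n))
                ≤ ENNReal.ofReal (Cor34.drift H (εs n) (Xe (εs n)) s) := by
              intro n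
              apply ENNReal.ofReal_le_ofReal
              unfold Cor34.drift
              apply div_le_div_of_nonneg_left
                (Real.rpow_nonneg (by linarith [hs.1, hεpos n]) _)
                (Cor34.drift_den_pos (hεpos n) _)
              have h2 : max (Xe (εs n) s) 0 ≤ max (X s) 0 :=
                max_le_max (hle _ (hεpos n) s (Ioc_subset_Icc_self hs)) le_rfl
              linarith
            calc ENNReal.ofReal (s ^ (2 * H - 1) / X s)
                = liminf (fun n => ENNReal.ofReal
                    ((s + εs n) ^ (2 * H - 1) / (max (X s) 0 + εs n))) atTop :=
                  (Tendsto.liminf_eq ((ENNReal.continuous_ofReal.tendsto _).comp hlow)).symm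
              _ ≤ _ := liminf_le_liminf (Eventually.of_forall hbd)
        have hFat : (∫⁻ s in Ioc (0:ℝ) t, ENNReal.ofReal (s ^ (2 * H - 1) / X s))
            ≤ liminf (fun n => ∫⁻ s in Ioc (0:ℝ) t,
                ENNReal.ofReal (Cor34.drift H (εs n) (Xe (εs n)) s)) atTop := by
          refine le_trans (lintegral_mono_ae ?_) (lintegral_liminf_le' hFmeas)
          filter_upwards [haemem] with s hs
          exact hpt s hs
        have hFn_eq : ∀ n, (∫⁻ s in Ioc (0:ℝ) t,
            ENNReal.ofReal (Cor34.drift H (εs n) (Xe (εs n)) s)) = ENNReal.ofReal (I n) := by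
          intro n
          have h1 := ofReal_integral_eq_lintegral_ofReal (hdriftint n)
            (haemem.mono fun s hs => Cor34.drift_nonneg hs.1.le (hεpos n))
          simp only [hIdef, intervalIntegral.integral_of_le htpos.le]
          exact h1.symm
        have hIc : Tendsto I atTop (nhds (c / a)) := by
          have h1 : Tendsto (fun n => a * I n / a) atTop (nhds (c / a)) :=
            hctend.div_const a
          have h2 : (fun n => a * I n / a) = I := by
            funext n
            field_simp
          rwa [h2] at h1
        have hliminfI : liminf (fun n => ENNReal.ofReal (I n)) atTop
            = ENNReal.ofReal (c / a) :=
          Tendsto.liminf_eq ((ENNReal.continuous_ofReal.tendsto _).comp hIc)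
        have hkey : (∫⁻ s in Ioc (0:ℝ) t, ENNReal.ofReal (s ^ (2 * H - 1) / X s))
            ≤ ENNReal.ofReal (c / a) := by
          refine le_trans hFat ?_
          rw [← hliminfI]
          apply le_of_eq
          congr 1
          funext n
          exact hFn_eq n
        have hpos_part : Integrable (fun s => max (s ^ (2 * H - 1) / X s) 0)
            (volume.restrict (Ioc (0:ℝ) t)) := hJint.pos_part
        have h1 : (∫ s in Ioc (0:ℝ) t, s ^ (2 * H - 1) / X s)
            ≤ ∫ s in Ioc (0:ℝ) t, max (s ^ (2 * H - 1) / X s) 0 :=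
          integral_mono_ae hJint hpos_part (Eventually.of_forall fun s => le_max_left _ _)
        have h2 : ENNReal.ofReal (∫ s in Ioc (0:ℝ) t, max (s ^ (2 * H - 1) / X s) 0)
            = ∫⁻ s in Ioc (0:ℝ) t, ENNReal.ofReal (s ^ (2 * H - 1) / X s) := by
          rw [ofReal_integral_eq_lintegral_ofReal hpos_part
            (Eventually.of_forall fun s => le_max_right _ _)]
          congr 1
          funext s
          rcases le_or_gt (s ^ (2 * H - 1) / X s) 0 with h | h
          · rw [max_eq_right h]
            simp [ENNReal.ofReal_eq_zero.2 h]
          · rw [max_eq_left h.le]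
        have h3 : (∫ s in Ioc (0:ℝ) t, max (s ^ (2 * H - 1) / X s) 0) ≤ c / a := by
          rw [← ENNReal.ofReal_le_ofReal_iff (div_nonneg hc0 ha.le), h2]
          exact hkey
        have hJle : (∫ s in (0:ℝ)..t, s ^ (2 * H - 1) / X s) ≤ c / a := by
          rw [intervalIntegral.integral_of_le htpos.le]
          linarith
        calc a * (∫ s in (0:ℝ)..t, s ^ (2 * H - 1) / X s) ≤ a * (c / a) :=
              mul_le_mul_of_nonneg_left hJle ha.le
          _ = c := by field_simp
      · rw [intervalIntegral.integral_undef hJ]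
        simpa using hc0
    rw [hcdef] at hgoal
    linarith
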